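/- With the construction below, for each n ∈ S and 1 ≤ i ≤ a_n let M_{n,i} denote the B-module F^n with B acting through θ_{n,i}. Then for (n,i) ≠ (m,j), the B-modules M_{n,i} and M_{m,j} are not isomorphic. -/

import Mathlib

open Matrix

/-- The `n×n` cyclic permutation matrix: identity block `I_{n-1}` in the upper right and
a `1` in the lower-left corner. -/
def cycMat (F : Type*) [Semiring F] (n : ℕ) : Matrix (Fin n) (Fin n) F :=
  Matrix.of fun k l => if (l : ℕ) = ((k : ℕ) + 1) % n then 1 else 0

/-- The matrix unit `E₁₁`, with `1` in the upper-left entry and zeros elsewhere. -/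
def e11 (F : Type*) [Semiring F] (n : ℕ) : Matrix (Fin n) (Fin n) F :=
  Matrix.of fun k l => if (k : ℕ) = 0 ∧ (l : ℕ) = 0 then 1 else 0

/-- Index set: pairs `(n, i)` with `n ≥ 2` and `1 ≤ i ≤ a n` (here `0`-indexed: `i < a n`).
Note that `n` lies in the support `S` of `a` automatically, since `i < a n` forces `a n ≠ 0`. -/
abbrev Idx (a : ℕ → ℕ) : Type := {p : ℕ × ℕ // 2 ≤ p.1 ∧ p.2 < a p.1}

/-- The ambient algebra `A = ∏_{n ∈ S} ∏_{i=1}^{a n} M_n(F)`. -/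
abbrev ConstrA (F : Type*) [Field F] (a : ℕ → ℕ) : Type _ :=
  ∀ p : Idx a, Matrix (Fin p.1.1) (Fin p.1.1) F

/-- The element `e` whose `(n,i)` component is `λ_{n,i} • E₁₁`. -/
def elemE {F : Type*} [Field F] (a : ℕ → ℕ) (lam : Idx a → F) : ConstrA F a :=
  fun p => lam p • e11 F p.1.1

/-- The element `σ` whose `(n,i)` component is the cyclic permutation matrix `P_n`. -/
def elemS (F : Type*) [Field F] (a : ℕ → ℕ) : ConstrA F a :=
  fun p => cycMat F p.1.1
/-- `B = F⟨e, σ⟩`, the unital `F`-subalgebra of `A` generated by `e` and `σ`. -/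
abbrev ConstrB (F : Type*) [Field F] (a : ℕ → ℕ) (lam : Idx a → F) :
    Subalgebra F (ConstrA F a) :=
  Algebra.adjoin F {elemE a lam, elemS F a}

set_option maxHeartbeats 1000000
set_option synthInstance.maxHeartbeats 400000

/-- The `B`-module structure `M_{n,i}` on `Fⁿ` (for the component `p = (n,i)`) in which `B`
acts through the projection `θ_{n,i} : A → M_n(F)`, i.e. `b • v = θ_{n,i}(b) ⬝ v`. -/
noncomputable def reprMod (F : Type*) [Field F] (a : ℕ → ℕ) (lam : Idx a → F) (p : Idx a) :
    Module ↥(ConstrB F a lam) (Fin p.1.1 → F) :=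
  Module.compHom (Fin p.1.1 → F)
    ((Matrix.toLinAlgEquiv' :
        Matrix (Fin p.1.1) (Fin p.1.1) F ≃ₐ[F] Module.End F (Fin p.1.1 → F)).toAlgHom.toRingHom.comp
      (((Pi.evalAlgHom F (fun q : Idx a => Matrix (Fin q.1.1) (Fin q.1.1) F) p).comp
        (ConstrB F a lam).val).toRingHom))

lemma reprMod_smul (F : Type*) [Field F] (a : ℕ → ℕ) (lam : Idx a → F) (p : Idx a)
    (b : ConstrB F a lam) (v : Fin p.1.1 → F) :
    letI := reprMod F a lam p
    b • v = Matrix.mulVec (b.val p) v := rfl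

lemma reprMod_algebraMap_smul (F : Type*) [Field F] (a : ℕ → ℕ) (lam : Idx a → F) (p : Idx a)
    (c : F) (v : Fin p.1.1 → F) :
    letI := reprMod F a lam p
    (algebraMap F (ConstrB F a lam) c) • v = c • v := by
  rw [reprMod_smul]
  show Matrix.mulVec ((algebraMap F (ConstrA F a) c) p) v = c • v
  simp [Pi.algebraMap_apply, Algebra.algebraMap_eq_smul_one, Matrix.smul_mulVec,
    Matrix.one_mulVec]
lemma elemE_mem (F : Type*) [Field F] (a : ℕ → ℕ) (lam : Idx a → F) :
    elemE a lam ∈ ConstrB F a lam :=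
  Algebra.subset_adjoin (Set.mem_insert _ _)

lemma e11_mulVec (F : Type*) [Field F] (n : ℕ) [NeZero n] (v : Fin n → F) :
    Matrix.mulVec (e11 F n) v = Pi.single 0 (v 0) := by
  funext k
  have hk : ((k : ℕ) = 0) ↔ (k = 0) := by
    constructor
    · intro h; exact Fin.ext (by simpa using h)
    · intro h; simp [h]
  simp only [Matrix.mulVec, e11, dotProduct, Matrix.of_apply, Pi.single_apply]
  rcases eq_or_ne k 0 with h | h
  · subst h
    rw [Finset.sum_eq_single 0] <;> simp +contextual [← Fin.val_eq_zero_iff]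
  · rw [if_neg h, Finset.sum_eq_zero]
    intro x _
    have : ¬((k:ℕ) = 0 ∧ (x:ℕ) = 0) := fun hc => h (hk.1 hc.1)
    rw [if_neg this, zero_mul]
/-- For distinct components `(n,i) ≠ (m,j)`, the `B`-modules `M_{n,i}` and `M_{m,j}`
are not isomorphic. -/
theorem stmt_13 (F : Type*) [Field F] [IsAlgClosed F] (a : ℕ → ℕ) (lam : Idx a → F)
    (hlam_ne : ∀ p, lam p ≠ 0)
    (hlam : ∀ p q : Idx a, p.1.1 = q.1.1 → p ≠ q → lam p ≠ lam q ∧ lam p ≠ -lam q)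
    (p q : Idx a) (hpq : p ≠ q) :
    letI := reprMod F a lam p
    letI := reprMod F a lam q
    IsEmpty ((Fin p.1.1 → F) ≃ₗ[↥(ConstrB F a lam)] (Fin q.1.1 → F)) := by
  obtain ⟨⟨n, i⟩, hn2, hia⟩ := p
  obtain ⟨⟨m, j⟩, hm2, hja⟩ := q
  letI := reprMod F a lam ⟨(n, i), hn2, hia⟩
  letI := reprMod F a lam ⟨(m, j), hm2, hja⟩
  refine ⟨fun f => ?_⟩
  haveI : NeZero n := ⟨by omega⟩
  haveI : NeZero m := ⟨by omega⟩
  have hFsmul : ∀ (c : F) (v : Fin n → F), f (c • v) = c • f v := by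
    intro c v
    rw [← reprMod_algebraMap_smul F a lam ⟨(n, i), hn2, hia⟩ c v,
      _root_.map_smul f (algebraMap F (ConstrB F a lam) c) v,
      reprMod_algebraMap_smul]
  have key : f (Matrix.mulVec (elemE a lam ⟨(n, i), hn2, hia⟩) (Pi.single 0 1 : Fin n → F))
      = Matrix.mulVec (elemE a lam ⟨(m, j), hm2, hja⟩)
          (f (Pi.single 0 1 : Fin n → F)) :=
    _root_.map_smul f (⟨elemE a lam, elemE_mem F a lam⟩ : ConstrB F a lam) (Pi.single 0 1)
  by_cases hnm : n = m
  · subst hnm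
    have hlamne : lam ⟨(n, i), hn2, hia⟩ ≠ lam ⟨(n, j), hm2, hja⟩ :=
      (hlam ⟨(n, i), hn2, hia⟩ ⟨(n, j), hm2, hja⟩ rfl hpq).1
    simp only [elemE] at key
    rw [Matrix.smul_mulVec, Matrix.smul_mulVec, e11_mulVec, e11_mulVec,
      Pi.single_eq_same, hFsmul] at key
    have h0 := congrFun key 0
    simp only [Pi.smul_apply, Pi.single_eq_same, smul_eq_mul] at h0
    have hfv0 : f (Pi.single 0 1 : Fin n → F) 0 = 0 := by
      rcases mul_eq_mul_right_iff.1 h0 with h | h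
      · exact absurd h hlamne
      · exact h
    rw [hfv0] at key
    simp only [Pi.single_zero, smul_zero, smul_eq_zero] at key
    rcases key with h | h
    · exact hlam_ne _ h
    · have hz : (Pi.single 0 1 : Fin n → F) = 0 := f.injective (by rw [h, map_zero])
      have := congrFun hz 0
      simp at this
  · let g : (Fin n → F) ≃ₗ[F] (Fin m → F) :=
      { toFun := f, invFun := f.symm,
        left_inv := f.left_inv, right_inv := f.right_inv,
        map_add' := f.map_add,
        map_smul' := fun c v => hFsmul c v }
    have := g.finrank_eq
    rw [Module.finrank_fin_fun, Module.finrank_fin_fun] at this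
    exact hnm this
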